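/- Let X, Y be independent exponential random variables with rates γ₁ > γ₂ > 0, σ = 2 min(X,Y)/(X+Y), P = X+Y. Then for 0 < ε < 1, lim_{p→0⁺} P(σ > ε | P < p) = 1 - ε. -/

import Mathlib

open MeasureTheory ProbabilityTheory Real Filter Set

lemma lintegral_linear_ramp (p c : ℝ) (hp : 0 ≤ p) (hc : 0 < c) :
    ∫⁻ x in Set.Ici (0:ℝ), ENNReal.ofReal (p - c * x) = ENNReal.ofReal (p^2 / (2*c)) := by
  have hpc : (0:ℝ) ≤ p / c := by positivity
  have hsplit : Set.Ici (0:ℝ) = Set.Ico 0 (p/c) ∪ Set.Ici (p/c) :=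
    (Set.Ico_union_Ici_eq_Ici hpc).symm
  have hdisj : Disjoint (Set.Ico (0:ℝ) (p/c)) (Set.Ici (p/c)) :=
    (Set.Iio_disjoint_Ici le_rfl).mono_left Set.Ico_subset_Iio_self
  rw [hsplit, lintegral_union measurableSet_Ici hdisj]
  have h2 : ∫⁻ x in Set.Ici (p/c), ENNReal.ofReal (p - c * x) = 0 := by
    rw [setLIntegral_congr_fun_ae measurableSet_Ici
      (Filter.Eventually.of_forall (fun x hx => ?_)), lintegral_zero]
    have : c * (p/c) ≤ c * x := by gcongr; exact hx
    rw [ENNReal.ofReal_eq_zero]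
    nlinarith [mul_div_cancel₀ p hc.ne']
  have h1 : ∫⁻ x in Set.Ico 0 (p/c), ENNReal.ofReal (p - c * x)
      = ENNReal.ofReal (p^2 / (2*c)) := by
    rw [← ofReal_integral_eq_lintegral_ofReal]
    · congr 1
      rw [MeasureTheory.integral_Ico_eq_integral_Ioo,
        ← MeasureTheory.integral_Ioc_eq_integral_Ioo,
        ← intervalIntegral.integral_of_le hpc]
      rw [intervalIntegral.integral_sub intervalIntegrable_const
        (intervalIntegral.intervalIntegrable_id.const_mul c)]
      rw [intervalIntegral.integral_const_mul, integral_id, intervalIntegral.integral_const]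
      simp only [smul_eq_mul]
      field_simp
      ring
    · exact ((continuous_const.sub (continuous_const.mul continuous_id)).integrableOn_Icc).mono_set Set.Ico_subset_Icc_self
    · filter_upwards [ae_restrict_mem measurableSet_Ico] with x hx
      have : c * x < c * (p/c) := by gcongr; exact hx.2
      have := mul_div_cancel₀ p hc.ne'
      simp only [Pi.zero_apply]
      nlinarith
  rw [h1, h2, add_zero]


lemma vol_wedge (p m : ℝ) (hp : 0 ≤ p) (hm : 0 ≤ m) :
    (volume.prod volume) {z : ℝ×ℝ | 0 ≤ z.1 ∧ 0 ≤ z.2 ∧ z.1 + z.2 < p ∧ m * z.1 ≤ z.2}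
      = ENNReal.ofReal (p^2/(2*(1+m))) := by
  have hS : MeasurableSet {z : ℝ×ℝ | 0 ≤ z.1 ∧ 0 ≤ z.2 ∧ z.1 + z.2 < p ∧ m * z.1 ≤ z.2} := by
    apply MeasurableSet.inter (measurableSet_le measurable_const measurable_fst)
    apply MeasurableSet.inter (measurableSet_le measurable_const measurable_snd)
    exact (measurableSet_lt (measurable_fst.add measurable_snd) measurable_const).inter
      (measurableSet_le (measurable_fst.const_mul m) measurable_snd)
  rw [Measure.prod_apply hS]
  have hsec : ∀ x : ℝ, volume (Prod.mk x ⁻¹' {z : ℝ×ℝ | 0 ≤ z.1 ∧ 0 ≤ z.2 ∧ z.1 + z.2 < p ∧ m * z.1 ≤ z.2})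
      = Set.indicator (Set.Ici 0) (fun x => ENNReal.ofReal (p - (1+m) * x)) x := by
    intro x
    by_cases hx : 0 ≤ x
    · have hpre : Prod.mk x ⁻¹' {z : ℝ×ℝ | 0 ≤ z.1 ∧ 0 ≤ z.2 ∧ z.1 + z.2 < p ∧ m * z.1 ≤ z.2}
          = Set.Ico (m*x) (p - x) := by
        ext y
        simp only [Set.mem_preimage, Set.mem_setOf_eq, Set.mem_Ico]
        constructor
        · rintro ⟨-, -, h3, h4⟩; exact ⟨h4, by linarith⟩
        · rintro ⟨h1, h2⟩
          refine ⟨hx, le_trans (by positivity) h1, by linarith, h1⟩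
      rw [hpre, Real.volume_Ico, Set.indicator_of_mem (Set.mem_Ici.mpr hx)]
      congr 1; ring
    · have hpre : Prod.mk x ⁻¹' {z : ℝ×ℝ | 0 ≤ z.1 ∧ 0 ≤ z.2 ∧ z.1 + z.2 < p ∧ m * z.1 ≤ z.2}
          = (∅ : Set ℝ) := by
        ext y; simp only [Set.mem_preimage, Set.mem_setOf_eq, Set.mem_empty_iff_false, iff_false]
        rintro ⟨h1, -⟩; exact hx h1
      rw [hpre, measure_empty, Set.indicator_of_notMem (fun h => hx (Set.mem_Ici.mp h))]
  rw [lintegral_congr hsec, lintegral_indicator measurableSet_Ici]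
  exact lintegral_linear_ramp p (1+m) hp (by linarith)

lemma vol_wedge' (p m : ℝ) (hp : 0 ≤ p) (hm : 0 ≤ m) :
    (volume.prod volume) {z : ℝ×ℝ | 0 ≤ z.1 ∧ 0 ≤ z.2 ∧ z.1 + z.2 < p ∧ m * z.2 ≤ z.1}
      = ENNReal.ofReal (p^2/(2*(1+m))) := by
  have hS : MeasurableSet {z : ℝ×ℝ | 0 ≤ z.1 ∧ 0 ≤ z.2 ∧ z.1 + z.2 < p ∧ m * z.2 ≤ z.1} := by
    apply MeasurableSet.inter (measurableSet_le measurable_const measurable_fst)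
    apply MeasurableSet.inter (measurableSet_le measurable_const measurable_snd)
    exact (measurableSet_lt (measurable_fst.add measurable_snd) measurable_const).inter
      (measurableSet_le (measurable_snd.const_mul m) measurable_fst)
  have hpre : Prod.swap ⁻¹' {z : ℝ×ℝ | 0 ≤ z.1 ∧ 0 ≤ z.2 ∧ z.1 + z.2 < p ∧ m * z.2 ≤ z.1}
      = {z : ℝ×ℝ | 0 ≤ z.1 ∧ 0 ≤ z.2 ∧ z.1 + z.2 < p ∧ m * z.1 ≤ z.2} := by
    ext z
    simp only [Set.mem_preimage, Prod.fst_swap, Prod.snd_swap, Set.mem_setOf_eq]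
    constructor
    · rintro ⟨h1, h2, h3, h4⟩; exact ⟨h2, h1, by linarith, h4⟩
    · rintro ⟨h1, h2, h3, h4⟩; exact ⟨h2, h1, by linarith, h4⟩
  rw [← ((Measure.measurePreserving_swap : MeasurePreserving Prod.swap ((volume : Measure ℝ).prod volume) (volume.prod volume))).measure_preimage
    hS.nullMeasurableSet, hpre, vol_wedge p m hp hm]

lemma vol_triangle (p : ℝ) (hp : 0 ≤ p) :
    (volume.prod volume) {z : ℝ×ℝ | 0 ≤ z.1 ∧ 0 ≤ z.2 ∧ z.1 + z.2 < p}
      = ENNReal.ofReal (p^2/2) := by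
  have := vol_wedge p 0 hp le_rfl
  simp only [zero_mul] at this
  rw [show {z : ℝ×ℝ | 0 ≤ z.1 ∧ 0 ≤ z.2 ∧ z.1 + z.2 < p}
      = {z : ℝ×ℝ | 0 ≤ z.1 ∧ 0 ≤ z.2 ∧ z.1 + z.2 < p ∧ 0 ≤ z.2} from by
    ext z; simp only [Set.mem_setOf_eq]; tauto, this]
  norm_num

lemma vol_shape (p ε : ℝ) (hp : 0 ≤ p) (hε0 : 0 < ε) (hε1 : ε < 1) :
    (volume.prod volume)
        {z : ℝ×ℝ | 0 ≤ z.1 ∧ 0 ≤ z.2 ∧ z.1 + z.2 < p ∧ ε < 2 * min z.1 z.2 / (z.1 + z.2)}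
      = ENNReal.ofReal ((1-ε) * (p^2/2)) := by
  set m : ℝ := (2 - ε)/ε with hm_def
  have hm1 : 1 < m := by rw [hm_def, lt_div_iff₀ hε0]; linarith
  have hm0 : 0 ≤ m := by linarith
  have key : ∀ a b : ℝ, m * a ≤ b → (2 - ε) * a ≤ ε * b := by
    intro a b h
    have h' := mul_le_mul_of_nonneg_left h hε0.le
    have he : ε * (m * a) = (2 - ε) * a := by rw [hm_def]; field_simp
    linarith
  have key' : ∀ a b : ℝ, a < m * b → ε * a < (2 - ε) * b := by
    intro a b h
    have h' := mul_lt_mul_of_pos_left h hε0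
    have he : ε * (m * b) = (2 - ε) * b := by rw [hm_def]; field_simp
    linarith
  set T : Set (ℝ×ℝ) := {z : ℝ×ℝ | 0 ≤ z.1 ∧ 0 ≤ z.2 ∧ z.1 + z.2 < p} with hT_def
  set R1 : Set (ℝ×ℝ) := {z : ℝ×ℝ | 0 ≤ z.1 ∧ 0 ≤ z.2 ∧ z.1 + z.2 < p ∧ m * z.1 ≤ z.2} with hR1_def
  set R2 : Set (ℝ×ℝ) := {z : ℝ×ℝ | 0 ≤ z.1 ∧ 0 ≤ z.2 ∧ z.1 + z.2 < p ∧ m * z.2 ≤ z.1} with hR2_def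
  have hR1m : MeasurableSet R1 := by
    apply MeasurableSet.inter (measurableSet_le measurable_const measurable_fst)
    apply MeasurableSet.inter (measurableSet_le measurable_const measurable_snd)
    exact (measurableSet_lt (measurable_fst.add measurable_snd) measurable_const).inter
      (measurableSet_le (measurable_fst.const_mul m) measurable_snd)
  have hR2m : MeasurableSet R2 := by
    apply MeasurableSet.inter (measurableSet_le measurable_const measurable_fst)
    apply MeasurableSet.inter (measurableSet_le measurable_const measurable_snd)
    exact (measurableSet_lt (measurable_fst.add measurable_snd) measurable_const).inter
      (measurableSet_le (measurable_snd.const_mul m) measurable_fst)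
  have hTA : {z : ℝ×ℝ | 0 ≤ z.1 ∧ 0 ≤ z.2 ∧ z.1 + z.2 < p ∧ ε < 2 * min z.1 z.2 / (z.1 + z.2)}
      = T \ (R1 ∪ R2) := by
    ext z
    obtain ⟨x, y⟩ := z
    simp only [hT_def, hR1_def, hR2_def, Set.mem_setOf_eq, Set.mem_diff, Set.mem_union]
    constructor
    · rintro ⟨h1, h2, h3, h4⟩
      have hs : 0 < x + y := by
        rcases eq_or_lt_of_le (by linarith : (0:ℝ) ≤ x + y) with h | h
        · exfalso; rw [← h] at h4; simp at h4; linarith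
        · exact h
      have h4' : ε * (x + y) < 2 * min x y := (lt_div_iff₀ hs).mp h4
      have hx2 : ε * (x + y) < 2 * x := by nlinarith [min_le_left x y]
      have hy2 : ε * (x + y) < 2 * y := by nlinarith [min_le_right x y]
      refine ⟨⟨h1, h2, h3⟩, ?_⟩
      rintro (⟨-, -, -, hr⟩ | ⟨-, -, -, hr⟩)
      · have := key x y hr; linarith
      · have := key y x hr; linarith
    · rintro ⟨⟨h1, h2, h3⟩, hnot⟩
      push_neg at hnot
      obtain ⟨hn1, hn2⟩ := hnot
      have hr1 : y < m * x := hn1 h1 h2 h3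
      have hr2 : x < m * y := hn2 h1 h2 h3
      have hx : 0 < x := by
        rcases mul_pos_iff.mp (lt_of_le_of_lt h2 hr1) with ⟨-, hx⟩ | ⟨hm', -⟩
        · exact hx
        · linarith
      have hy : 0 < y := by
        rcases mul_pos_iff.mp (lt_of_le_of_lt h1 hr2) with ⟨-, hy⟩ | ⟨hm', -⟩
        · exact hy
        · linarith
      have hs : 0 < x + y := by linarith
      refine ⟨h1, h2, h3, ?_⟩
      rw [lt_div_iff₀ hs]
      rcases le_total x y with hxy | hxy
      · rw [min_eq_left hxy]
        have := key' y x hr1; linarith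
      · rw [min_eq_right hxy]
        have := key' x y hr2; linarith
  have hsub : R1 ∪ R2 ⊆ T := by
    rintro z (⟨h1, h2, h3, -⟩ | ⟨h1, h2, h3, -⟩) <;> exact ⟨h1, h2, h3⟩
  have h0 : (volume.prod volume) (R1 ∩ R2) = 0 := by
    refine measure_mono_null (show R1 ∩ R2 ⊆ {((0:ℝ), (0:ℝ))} from ?_) ?_
    · rintro ⟨x, y⟩ ⟨⟨a1, a2, a3, a4⟩, ⟨b1, b2, b3, b4⟩⟩
      have hmm : m * 1 < m * m := by
        exact mul_lt_mul_of_pos_left hm1 (by linarith)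
      have h4' := mul_le_mul_of_nonneg_left a4 hm0
      have hx0 : x = 0 := by nlinarith
      have hy0 : y = 0 := by nlinarith
      simp [hx0, hy0]
    · rw [← Set.singleton_prod_singleton, Measure.prod_prod, Real.volume_singleton, mul_zero]
  have hu : (volume.prod volume) (R1 ∪ R2)
      = ENNReal.ofReal (p^2/(2*(1+m))) + ENNReal.ofReal (p^2/(2*(1+m))) := by
    have := measure_union_add_inter (μ := volume.prod volume) R1 hR2m
    rw [h0, add_zero] at this
    rw [this, vol_wedge p m hp hm0, vol_wedge' p m hp hm0]
  rw [hTA, measure_diff hsub (hR1m.union hR2m).nullMeasurableSet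
    (by rw [hu]; exact ENNReal.add_ne_top.mpr ⟨ENNReal.ofReal_ne_top, ENNReal.ofReal_ne_top⟩),
    hu, vol_triangle p hp, ← ENNReal.ofReal_add (by positivity) (by positivity),
    ← ENNReal.ofReal_sub _ (by positivity)]
  congr 1
  rw [hm_def]
  field_simp
  ring

lemma measurable_expPDF (r : ℝ) : Measurable (exponentialPDF r) :=
  (measurable_exponentialPDFReal r).ennreal_ofReal

lemma exp_prod_eq (γ₁ γ₂ : ℝ) (h1 : 0 < γ₁) (h2 : 0 < γ₂) :
    (expMeasure γ₁).prod (expMeasure γ₂)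
      = (volume.prod volume).withDensity
          (fun z => exponentialPDF γ₁ z.1 * exponentialPDF γ₂ z.2) := by
  haveI := isProbabilityMeasure_expMeasure h1
  haveI := isProbabilityMeasure_expMeasure h2
  refine Measure.prod_eq fun s t hs ht => ?_
  rw [withDensity_apply _ (hs.prod ht), ← Measure.prod_restrict,
    lintegral_prod_mul (measurable_expPDF γ₁).aemeasurable (measurable_expPDF γ₂).aemeasurable,
    show expMeasure γ₁ = volume.withDensity (exponentialPDF γ₁) from rfl,
    show expMeasure γ₂ = volume.withDensity (exponentialPDF γ₂) from rfl,
    withDensity_apply _ hs, withDensity_apply _ ht]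

lemma exp_prod_null (γ₁ γ₂ : ℝ) (h1 : 0 < γ₁) (h2 : 0 < γ₂) {U : Set (ℝ×ℝ)}
    (hU : MeasurableSet U) :
    (expMeasure γ₁).prod (expMeasure γ₂) U
      = (expMeasure γ₁).prod (expMeasure γ₂) (U ∩ {z : ℝ×ℝ | 0 ≤ z.1 ∧ 0 ≤ z.2}) := by
  have hQ : MeasurableSet {z : ℝ×ℝ | 0 ≤ z.1 ∧ 0 ≤ z.2} :=
    (measurableSet_le measurable_const measurable_fst).inter
      (measurableSet_le measurable_const measurable_snd)
  have key := measure_inter_add_diff (μ := (expMeasure γ₁).prod (expMeasure γ₂)) U hQ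
  have hz : (expMeasure γ₁).prod (expMeasure γ₂) (U \ {z : ℝ×ℝ | 0 ≤ z.1 ∧ 0 ≤ z.2}) = 0 := by
    rw [exp_prod_eq γ₁ γ₂ h1 h2, withDensity_apply _ (hU.diff hQ),
      setLIntegral_congr_fun_ae (hU.diff hQ) (Filter.Eventually.of_forall fun z hz => ?_),
      lintegral_zero]
    have hz' : z.1 < 0 ∨ z.2 < 0 := by
      rcases hz with ⟨-, hq⟩
      simp only [Set.mem_setOf_eq, not_and_or, not_le] at hq
      exact hq
    rcases hz' with h | h
    · rw [exponentialPDF_of_neg h, zero_mul]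
    · rw [exponentialPDF_of_neg h, mul_zero]
  rw [← key, hz, add_zero]

lemma exp_prod_bounds (γ₁ γ₂ p : ℝ) (h2 : 0 < γ₂) (h12 : γ₂ < γ₁) {S : Set (ℝ×ℝ)}
    (hS : MeasurableSet S)
    (hsub : S ⊆ {z : ℝ×ℝ | 0 ≤ z.1 ∧ 0 ≤ z.2 ∧ z.1 + z.2 < p}) :
    ENNReal.ofReal (γ₁ * γ₂ * rexp (-(γ₁ * p))) * (volume.prod volume) S
        ≤ (expMeasure γ₁).prod (expMeasure γ₂) S
      ∧ (expMeasure γ₁).prod (expMeasure γ₂) S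
        ≤ ENNReal.ofReal (γ₁ * γ₂) * (volume.prod volume) S := by
  have h1 : 0 < γ₁ := lt_trans h2 h12
  rw [exp_prod_eq γ₁ γ₂ h1 h2, withDensity_apply _ hS]
  have hdens : ∀ z : ℝ×ℝ, z ∈ S →
      exponentialPDF γ₁ z.1 * exponentialPDF γ₂ z.2
        = ENNReal.ofReal (γ₁ * γ₂ * (rexp (-(γ₁ * z.1)) * rexp (-(γ₂ * z.2)))) := by
    intro z hz
    obtain ⟨hx, hy, -⟩ := hsub hz
    rw [exponentialPDF_of_nonneg hx, exponentialPDF_of_nonneg hy,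
      ← ENNReal.ofReal_mul (by positivity)]
    congr 1; ring
  constructor
  · calc ENNReal.ofReal (γ₁ * γ₂ * rexp (-(γ₁ * p))) * (volume.prod volume) S
        = ∫⁻ _ in S, ENNReal.ofReal (γ₁ * γ₂ * rexp (-(γ₁ * p))) ∂(volume.prod volume) := by
          rw [setLIntegral_const]
      _ ≤ _ := by
          refine setLIntegral_mono' hS fun z hz => ?_
          rw [hdens z hz]
          apply ENNReal.ofReal_le_ofReal
          obtain ⟨hx, hy, hp⟩ := hsub hz
          have : rexp (-(γ₁ * p)) ≤ rexp (-(γ₁ * z.1)) * rexp (-(γ₂ * z.2)) := by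
            rw [← Real.exp_add, Real.exp_le_exp]
            nlinarith [mul_nonneg (sub_nonneg.mpr h12.le) hy]
          have hγγ : (0:ℝ) ≤ γ₁ * γ₂ := by positivity
          nlinarith
  · calc (∫⁻ z in S, exponentialPDF γ₁ z.1 * exponentialPDF γ₂ z.2 ∂(volume.prod volume))
        ≤ ∫⁻ _ in S, ENNReal.ofReal (γ₁ * γ₂) ∂(volume.prod volume) := by
          refine setLIntegral_mono' hS fun z hz => ?_
          rw [hdens z hz]
          apply ENNReal.ofReal_le_ofReal
          obtain ⟨hx, hy, -⟩ := hsub hz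
          have e1 : rexp (-(γ₁ * z.1)) ≤ 1 := Real.exp_le_one_iff.mpr (by nlinarith)
          have e2 : rexp (-(γ₂ * z.2)) ≤ 1 := Real.exp_le_one_iff.mpr (by nlinarith)
          have p1 : (0:ℝ) < rexp (-(γ₁ * z.1)) := Real.exp_pos _
          have p2 : (0:ℝ) < rexp (-(γ₂ * z.2)) := Real.exp_pos _
          have hmul : rexp (-(γ₁ * z.1)) * rexp (-(γ₂ * z.2)) ≤ 1 :=
            mul_le_one₀ e1 p2.le e2
          nlinarith [mul_pos h1 h2]
      _ = ENNReal.ofReal (γ₁ * γ₂) * (volume.prod volume) S := setLIntegral_const _ _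

theorem cond_shape_small_perimeter_limit
    {Ω : Type*} [MeasurableSpace Ω] (μ : Measure Ω) [IsProbabilityMeasure μ]
    (γ₁ γ₂ : ℝ) (hγ₂ : 0 < γ₂) (hγ : γ₂ < γ₁) (X Y : Ω → ℝ)
    (hX : Measurable X) (hY : Measurable Y)
    (hXd : μ.map X = expMeasure γ₁) (hYd : μ.map Y = expMeasure γ₂)
    (hind : IndepFun X Y μ) (ε : ℝ) (hε0 : 0 < ε) (hε1 : ε < 1) :
    Tendsto (fun p : ℝ =>
        ((μ[|{ω | X ω + Y ω < p}]) {ω | 2 * min (X ω) (Y ω) / (X ω + Y ω) > ε}).toReal)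
      (nhdsWithin 0 (Set.Ioi 0)) (nhds (1 - ε)) := by
  have h1 : 0 < γ₁ := lt_trans hγ₂ hγ
  haveI := isProbabilityMeasure_expMeasure h1
  haveI := isProbabilityMeasure_expMeasure hγ₂
  set ν : Measure (ℝ×ℝ) := (expMeasure γ₁).prod (expMeasure γ₂) with hν_def
  have hpair : Measurable (fun ω => (X ω, Y ω)) := hX.prodMk hY
  have hmap : μ.map (fun ω => (X ω, Y ω)) = ν := by
    rw [hν_def, ← hXd, ← hYd]
    exact (indepFun_iff_map_prod_eq_prod_map_map hX.aemeasurable hY.aemeasurable).mp hind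
  have hTm : ∀ p : ℝ, MeasurableSet {z : ℝ×ℝ | z.1 + z.2 < p} := fun p =>
    measurableSet_lt (measurable_fst.add measurable_snd) measurable_const
  have hAm : MeasurableSet {z : ℝ×ℝ | ε < 2 * min z.1 z.2 / (z.1 + z.2)} :=
    measurableSet_lt measurable_const
      ((measurable_const.mul (measurable_fst.min measurable_snd)).div
        (measurable_fst.add measurable_snd))
  have hTqm : ∀ p : ℝ, MeasurableSet {z : ℝ×ℝ | 0 ≤ z.1 ∧ 0 ≤ z.2 ∧ z.1 + z.2 < p} := fun p =>
    (measurableSet_le measurable_const measurable_fst).inter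
      ((measurableSet_le measurable_const measurable_snd).inter
        (measurableSet_lt (measurable_fst.add measurable_snd) measurable_const))
  have hBm : ∀ p : ℝ, MeasurableSet {ω | X ω + Y ω < p} := fun p =>
    measurableSet_lt (hX.add hY) measurable_const
  -- identify the measures of the events
  have hden : ∀ p : ℝ, μ {ω | X ω + Y ω < p}
      = ν {z : ℝ×ℝ | 0 ≤ z.1 ∧ 0 ≤ z.2 ∧ z.1 + z.2 < p} := by
    intro p
    have e1 : μ {ω | X ω + Y ω < p}
        = ν {z : ℝ×ℝ | z.1 + z.2 < p} := by
      rw [← hmap, Measure.map_apply hpair (hTm p)]; rfl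
    rw [e1, hν_def, exp_prod_null γ₁ γ₂ h1 hγ₂ (hTm p)]
    congr 1
    ext z; simp only [Set.mem_inter_iff, Set.mem_setOf_eq]; tauto
  have hnum : ∀ p : ℝ, μ ({ω | X ω + Y ω < p} ∩ {ω | 2 * min (X ω) (Y ω) / (X ω + Y ω) > ε})
      = ν {z : ℝ×ℝ | 0 ≤ z.1 ∧ 0 ≤ z.2 ∧ z.1 + z.2 < p ∧ ε < 2 * min z.1 z.2 / (z.1 + z.2)} := by
    intro p
    have e1 : μ ({ω | X ω + Y ω < p} ∩ {ω | 2 * min (X ω) (Y ω) / (X ω + Y ω) > ε})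
        = ν ({z : ℝ×ℝ | z.1 + z.2 < p} ∩ {z : ℝ×ℝ | ε < 2 * min z.1 z.2 / (z.1 + z.2)}) := by
      rw [← hmap, Measure.map_apply hpair ((hTm p).inter hAm)]; rfl
    rw [e1, hν_def, exp_prod_null γ₁ γ₂ h1 hγ₂ ((hTm p).inter hAm)]
    congr 1
    ext z; simp only [Set.mem_inter_iff, Set.mem_setOf_eq]; tauto
  -- per-p bounds
  have hmain : ∀ p : ℝ, 0 < p →
      (1-ε) * rexp (-(γ₁*p))
        ≤ ((μ[|{ω | X ω + Y ω < p}]) {ω | 2 * min (X ω) (Y ω) / (X ω + Y ω) > ε}).toReal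
      ∧ ((μ[|{ω | X ω + Y ω < p}]) {ω | 2 * min (X ω) (Y ω) / (X ω + Y ω) > ε}).toReal
        ≤ (1-ε) * rexp (γ₁*p) := by
    intro p hp
    set c : ℝ := γ₁ * γ₂ with hc_def
    have hcpos : 0 < c := by positivity
    set E : ℝ := rexp (-(γ₁*p)) with hE_def
    have hEpos : 0 < E := Real.exp_pos _
    have h1ε : (0:ℝ) < 1 - ε := by linarith
    have hsubT : {z : ℝ×ℝ | 0 ≤ z.1 ∧ 0 ≤ z.2 ∧ z.1 + z.2 < p ∧ ε < 2 * min z.1 z.2 / (z.1 + z.2)}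
        ⊆ {z : ℝ×ℝ | 0 ≤ z.1 ∧ 0 ≤ z.2 ∧ z.1 + z.2 < p} := by
      rintro z ⟨a, b, c', -⟩; exact ⟨a, b, c'⟩
    have hTAqm : MeasurableSet {z : ℝ×ℝ | 0 ≤ z.1 ∧ 0 ≤ z.2 ∧ z.1 + z.2 < p
        ∧ ε < 2 * min z.1 z.2 / (z.1 + z.2)} := by
      refine MeasurableSet.inter (measurableSet_le measurable_const measurable_fst) ?_
      refine MeasurableSet.inter (measurableSet_le measurable_const measurable_snd) ?_
      exact (measurableSet_lt (measurable_fst.add measurable_snd) measurable_const).inter hAm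
    have hboundsT := exp_prod_bounds γ₁ γ₂ p hγ₂ hγ (hTqm p) (subset_refl _)
    have hboundsA := exp_prod_bounds γ₁ γ₂ p hγ₂ hγ hTAqm hsubT
    rw [vol_triangle p hp.le] at hboundsT
    rw [vol_shape p ε hp.le hε0 hε1] at hboundsA
    set b : ℝ := (μ {ω | X ω + Y ω < p}).toReal with hb_def
    set a : ℝ := (μ ({ω | X ω + Y ω < p} ∩ {ω | 2 * min (X ω) (Y ω) / (X ω + Y ω) > ε})).toReal
      with ha_def
    have hb_lb : c * E * (p^2/2) ≤ b := by
      rw [hb_def, hden p]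
      have := hboundsT.1
      calc c * E * (p^2/2)
          = (ENNReal.ofReal (c * E) * ENNReal.ofReal (p^2/2)).toReal := by
            rw [← ENNReal.ofReal_mul (by positivity), ENNReal.toReal_ofReal (by positivity)]
        _ ≤ _ := ENNReal.toReal_mono (measure_ne_top _ _) this
    have hb_ub : b ≤ c * (p^2/2) := by
      rw [hb_def, hden p]
      have := hboundsT.2
      calc (ν {z : ℝ×ℝ | 0 ≤ z.1 ∧ 0 ≤ z.2 ∧ z.1 + z.2 < p}).toReal
          ≤ (ENNReal.ofReal c * ENNReal.ofReal (p^2/2)).toReal :=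
            ENNReal.toReal_mono (by finiteness) this
        _ = c * (p^2/2) := by
            rw [← ENNReal.ofReal_mul (by positivity), ENNReal.toReal_ofReal (by positivity)]
    have ha_lb : c * E * ((1-ε)*(p^2/2)) ≤ a := by
      rw [ha_def, hnum p]
      have := hboundsA.1
      calc c * E * ((1-ε)*(p^2/2))
          = (ENNReal.ofReal (c * E) * ENNReal.ofReal ((1-ε)*(p^2/2))).toReal := by
            rw [← ENNReal.ofReal_mul (by positivity), ENNReal.toReal_ofReal
              (mul_nonneg (by positivity) (mul_nonneg h1ε.le (by positivity)))]
        _ ≤ _ := ENNReal.toReal_mono (measure_ne_top _ _) this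
    have ha_ub : a ≤ c * ((1-ε)*(p^2/2)) := by
      rw [ha_def, hnum p]
      have := hboundsA.2
      calc (ν {z : ℝ×ℝ | 0 ≤ z.1 ∧ 0 ≤ z.2 ∧ z.1 + z.2 < p
            ∧ ε < 2 * min z.1 z.2 / (z.1 + z.2)}).toReal
          ≤ (ENNReal.ofReal c * ENNReal.ofReal ((1-ε)*(p^2/2))).toReal :=
            ENNReal.toReal_mono (by finiteness) this
        _ = c * ((1-ε)*(p^2/2)) := by
            rw [← ENNReal.ofReal_mul (by positivity), ENNReal.toReal_ofReal
              (mul_nonneg hcpos.le (mul_nonneg h1ε.le (by positivity)))]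
    have hbpos : 0 < b := lt_of_lt_of_le (by positivity) hb_lb
    have hanneg : 0 ≤ a := ENNReal.toReal_nonneg
    have hcond : ((μ[|{ω | X ω + Y ω < p}]) {ω | 2 * min (X ω) (Y ω) / (X ω + Y ω) > ε}).toReal
        = a / b := by
      rw [cond_apply (hBm p), ENNReal.toReal_mul, ENNReal.toReal_inv, ha_def, hb_def,
        inv_mul_eq_div]
    rw [hcond]
    constructor
    · have hdiv : c * E * ((1-ε)*(p^2/2)) / (c * (p^2/2)) ≤ a / b :=
        div_le_div₀ hanneg ha_lb hbpos hb_ub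
      have heq : c * E * ((1-ε)*(p^2/2)) / (c * (p^2/2)) = (1-ε) * E := by
        rw [div_eq_iff (by positivity : c * (p^2/2) ≠ 0)]; ring
      linarith [hdiv, heq ▸ hdiv]
    · have hdiv : a / b ≤ c * ((1-ε)*(p^2/2)) / (c * E * (p^2/2)) :=
        div_le_div₀ (mul_nonneg hcpos.le (mul_nonneg h1ε.le (by positivity))) ha_ub
          (by positivity) hb_lb
      have heq : c * ((1-ε)*(p^2/2)) / (c * E * (p^2/2)) = (1-ε) * rexp (γ₁*p) := by
        rw [div_eq_iff (by positivity : c * E * (p^2/2) ≠ 0), hE_def]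
        have hee : rexp (γ₁*p) * rexp (-(γ₁*p)) = 1 := by
          rw [← Real.exp_add]; simp
        nlinarith [hee]
      linarith [hdiv, heq ▸ hdiv]
  -- squeeze
  have hlow : Tendsto (fun p : ℝ => (1-ε) * rexp (-(γ₁*p)))
      (nhdsWithin 0 (Set.Ioi 0)) (nhds (1-ε)) := by
    have hcont : Continuous (fun p : ℝ => (1-ε) * rexp (-(γ₁*p))) := by
      exact continuous_const.mul (Real.continuous_exp.comp (continuous_const.mul continuous_id).neg)
    have := hcont.tendsto 0
    simp only [mul_zero, neg_zero, Real.exp_zero, mul_one] at this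
    exact this.mono_left nhdsWithin_le_nhds
  have hhigh : Tendsto (fun p : ℝ => (1-ε) * rexp (γ₁*p))
      (nhdsWithin 0 (Set.Ioi 0)) (nhds (1-ε)) := by
    have hcont : Continuous (fun p : ℝ => (1-ε) * rexp (γ₁*p)) := by
      exact continuous_const.mul (Real.continuous_exp.comp (continuous_const.mul continuous_id))
    have := hcont.tendsto 0
    simp only [mul_zero, Real.exp_zero, mul_one] at this
    exact this.mono_left nhdsWithin_le_nhds
  refine tendsto_of_tendsto_of_tendsto_of_le_of_le' hlow hhigh ?_ ?_
  · filter_upwards [self_mem_nhdsWithin] with p hp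
    exact (hmain p hp).1
  · filter_upwards [self_mem_nhdsWithin] with p hp
    exact (hmain p hp).2
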